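/- Let N_c, C_x, C_y, E_x, E_y be positive integers satisfying E_x · E_y · N_c > (C_x + E_x − 1) · (C_y + E_y − 1), and let S_1, …, S_{N_c} : ℤ × ℤ → ℂ be finitely supported functions, each supported in a C_x × C_y rectangle. Then there exists a family α_1, …, α_{N_c} : ℤ × ℤ → ℂ, not all identically zero, with each α_c supported in an E_x × E_y rectangle, such that for EVERY finitely supported m : ℤ × ℤ → ℂ, the multi-coil k-space data ρ_c := S_c ⋆ m satisfies Σ_{c=1}^{N_c} α_c ⋆ ρ_c = 0 identically on ℤ × ℤ; in particular the annihilating kernel (α_c) can be chosen independently of the image content m. -/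

import Mathlib

/-- `f` is supported in an `a × b` rectangle: its support is contained in
`{(x, y) : 0 ≤ x < a, 0 ≤ y < b}`. -/
def SupportedInRect (f : AddMonoidAlgebra ℂ (ℤ × ℤ)) (a b : ℕ) : Prop :=
  ∀ p ∈ f.coeff.support, 0 ≤ p.1 ∧ p.1 < (a : ℤ) ∧ 0 ≤ p.2 ∧ p.2 < (b : ℤ)

/-- Embedding of functions on a finite rectangle into `AddMonoidAlgebra ℂ (ℤ × ℤ)`. -/
noncomputable def embRect (Ex Ey : ℕ) :
    ((Fin Ex × Fin Ey) → ℂ) →ₗ[ℂ] AddMonoidAlgebra ℂ (ℤ × ℤ) :=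
  ∑ p : Fin Ex × Fin Ey,
    (AddMonoidAlgebra.lsingle (R := ℂ) (((p.1 : ℤ), (p.2 : ℤ)) : ℤ × ℤ)).comp (LinearMap.proj p)

lemma embRect_apply (Ex Ey : ℕ) (v : (Fin Ex × Fin Ey) → ℂ) (q : Fin Ex × Fin Ey) :
    (embRect Ex Ey v).coeff ((q.1 : ℤ), (q.2 : ℤ)) = v q := by
  have : (embRect Ex Ey v) = ∑ p : Fin Ex × Fin Ey,
      AddMonoidAlgebra.single (((p.1 : ℤ), (p.2 : ℤ)) : ℤ × ℤ) (v p) := by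
    rw [embRect]
    exact map_sum (LinearMap.applyₗ (R := ℂ) v) _ _
  rw [this, AddMonoidAlgebra.coeff_sum, Finsupp.finset_sum_apply]
  rw [Finset.sum_eq_single q]
  · simp
  · intro p _ hpq
    rw [AddMonoidAlgebra.coeff_single, Finsupp.single_apply, if_neg]
    intro h
    apply hpq
    have h1 : (p.1 : ℤ) = (q.1 : ℤ) := congrArg Prod.fst h
    have h2 : (p.2 : ℤ) = (q.2 : ℤ) := congrArg Prod.snd h
    exact Prod.ext (Fin.ext (by exact_mod_cast h1)) (Fin.ext (by exact_mod_cast h2))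
  · intro h; exact absurd (Finset.mem_univ q) h

lemma embRect_supported (Ex Ey : ℕ) (v : (Fin Ex × Fin Ey) → ℂ) :
    SupportedInRect (embRect Ex Ey v) Ex Ey := by
  intro z hz
  have : (embRect Ex Ey v) = ∑ p : Fin Ex × Fin Ey,
      AddMonoidAlgebra.single (((p.1 : ℤ), (p.2 : ℤ)) : ℤ × ℤ) (v p) := by
    rw [embRect]
    exact map_sum (LinearMap.applyₗ (R := ℂ) v) _ _
  rw [Finsupp.mem_support_iff, this, AddMonoidAlgebra.coeff_sum, Finsupp.finset_sum_apply] at hz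
  by_contra hcon
  apply hz
  apply Finset.sum_eq_zero
  intro p _
  rw [AddMonoidAlgebra.coeff_single, Finsupp.single_apply, if_neg]
  intro h
  apply hcon
  rw [← h]
  refine ⟨Int.natCast_nonneg _, ?_, Int.natCast_nonneg _, ?_⟩
  · show ((p.1 : ℕ) : ℤ) < (Ex : ℤ); exact_mod_cast p.1.isLt
  · show ((p.2 : ℕ) : ℤ) < (Ey : ℤ); exact_mod_cast p.2.isLt

theorem annihilating_kernel_content_independent
    (Nc Cx Cy Ex Ey : ℕ)
    (hNc : 0 < Nc) (hCx : 0 < Cx) (hCy : 0 < Cy) (hEx : 0 < Ex) (hEy : 0 < Ey)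
    (hcount : Ex * Ey * Nc > (Cx + Ex - 1) * (Cy + Ey - 1))
    (S : Fin Nc → AddMonoidAlgebra ℂ (ℤ × ℤ))
    (hS : ∀ c, SupportedInRect (S c) Cx Cy) :
    ∃ α : Fin Nc → AddMonoidAlgebra ℂ (ℤ × ℤ),
      (¬ ∀ c, α c = 0) ∧
      (∀ c, SupportedInRect (α c) Ex Ey) ∧
      ∀ m : AddMonoidAlgebra ℂ (ℤ × ℤ),
        (∑ c, α c * (S c * m)) = 0 := by
  set A := Cx + Ex - 1 with hA
  set B := Cy + Ey - 1 with hB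
  -- the big linear map
  let curry : Fin Nc → ((Fin Nc × Fin Ex × Fin Ey) → ℂ) →ₗ[ℂ] ((Fin Ex × Fin Ey) → ℂ) :=
    fun c => LinearMap.funLeft ℂ ℂ (fun p => (c, p))
  let L : ((Fin Nc × Fin Ex × Fin Ey) → ℂ) →ₗ[ℂ] AddMonoidAlgebra ℂ (ℤ × ℤ) :=
    ∑ c : Fin Nc, (LinearMap.mulRight ℂ (S c)).comp ((embRect Ex Ey).comp (curry c))
  let ev : AddMonoidAlgebra ℂ (ℤ × ℤ) →ₗ[ℂ] ((Fin A × Fin B) → ℂ) :=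
    LinearMap.pi (fun q => (Finsupp.lapply (((q.1 : ℤ), (q.2 : ℤ)) : ℤ × ℤ)).comp
      (AddMonoidAlgebra.coeffLinearEquiv ℂ).toLinearMap)
  let T := ev.comp L
  -- T is not injective by dimension count
  have hnotinj : ¬ Function.Injective T := by
    intro hinj
    have := LinearMap.finrank_le_finrank_of_injective hinj
    rw [Module.finrank_fintype_fun_eq_card, Module.finrank_fintype_fun_eq_card] at this
    simp only [Fintype.card_prod, Fintype.card_fin] at this
    rw [show Nc * (Ex * Ey) = Ex * Ey * Nc from by ring] at this
    exact absurd hcount (not_lt.mpr this)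
  -- get a nonzero kernel element
  rw [Function.not_injective_iff] at hnotinj
  obtain ⟨u, w, huw, hne⟩ := hnotinj
  set v := u - w with hv
  have hv0 : v ≠ 0 := sub_ne_zero.mpr hne
  have hTv : T v = 0 := by rw [hv, map_sub, huw, sub_self]
  -- the kernels
  refine ⟨fun c => embRect Ex Ey (curry c v), ?_, fun c => embRect_supported _ _ _, ?_⟩
  · -- not all zero
    intro hall
    apply hv0
    funext ⟨c, p⟩
    have := congrArg (fun f => f.coeff ((p.1 : ℤ), (p.2 : ℤ))) (hall c)
    simpa [embRect_apply, curry, LinearMap.funLeft_apply] using this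
  · -- annihilation
    have hLv : L v = ∑ c : Fin Nc, embRect Ex Ey (curry c v) * S c := by
      simp [L, LinearMap.sum_apply, LinearMap.mulRight_apply]
    -- support of L v is in the A × B rectangle
    have hsupp : ∀ z ∈ (L v).coeff.support, 0 ≤ z.1 ∧ z.1 < (A : ℤ) ∧ 0 ≤ z.2 ∧ z.2 < (B : ℤ) := by
      intro z hz
      rw [hLv, AddMonoidAlgebra.coeff_sum] at hz
      obtain ⟨c, -, hzc⟩ := Finsupp.mem_support_finset_sum z hz
      have hzc' := AddMonoidAlgebra.support_coeff_mul_subset _ _ hzc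
      rw [Finset.mem_add] at hzc'
      obtain ⟨x, hx, y, hy, hxy⟩ := hzc'
      have hxr := embRect_supported Ex Ey (curry c v) x hx
      have hyr := hS c y hy
      subst hxy
      obtain ⟨hx1, hx2, hx3, hx4⟩ := hxr
      obtain ⟨hy1, hy2, hy3, hy4⟩ := hyr
      have hAZ : (A : ℤ) = (Cx : ℤ) + (Ex : ℤ) - 1 := by omega
      have hBZ : (B : ℤ) = (Cy : ℤ) + (Ey : ℤ) - 1 := by omega
      rw [Prod.fst_add, Prod.snd_add]
      omega
    -- L v = 0
    have hLv0 : L v = 0 := by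
      ext z
      rw [AddMonoidAlgebra.coeff_zero, Finsupp.coe_zero, Pi.zero_apply]
      by_cases hz : z ∈ (L v).coeff.support
      · obtain ⟨h1, h2, h3, h4⟩ := hsupp z hz
        have hi : z.1.toNat < A := by omega
        have hj : z.2.toNat < B := by omega
        have hz' : z = (((⟨z.1.toNat, hi⟩ : Fin A) : ℤ), ((⟨z.2.toNat, hj⟩ : Fin B) : ℤ)) := by
          simp [Prod.ext_iff]; omega
        have := congrArg (fun f => f (⟨z.1.toNat, hi⟩, ⟨z.2.toNat, hj⟩)) hTv
        simp only [T, ev, LinearMap.comp_apply, LinearMap.pi_apply, Finsupp.lapply_apply,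
          AddMonoidAlgebra.coeffLinearEquiv_apply, LinearEquiv.coe_coe,
          Pi.zero_apply] at this
        rw [hz']
        exact this
      · exact Finsupp.notMem_support_iff.mp hz
    intro m
    calc ∑ c : Fin Nc, embRect Ex Ey (curry c v) * (S c * m)
        = (∑ c : Fin Nc, embRect Ex Ey (curry c v) * S c) * m := by
          rw [Finset.sum_mul]; simp [mul_assoc]
      _ = 0 := by rw [← hLv, hLv0, zero_mul]
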